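/- arXiv:1402.1197 — 3 statements merged into one kernel-verified Lean document; each statement's English description precedes it below -/
import Mathlib

section
/- Getzler identity: for all multilinear maps h ∈ C^m, f ∈ C^n, g ∈ C^p, the associator of the total composition satisfies (h ∘ f) ∘ g − h ∘ (f ∘ g) = ⟨h|fg⟩ + (−1)^{(n−1)(p−1)} ⟨h|gf⟩. -/
open Finset

section OperadPrelude

variable {K : Type*} [CommRing K] {L : Type*} [AddCommGroup L] [Module K L]

/-- `C K L n`: the `K`-module of `n`-multilinear maps `L^n → L`
(the degree-`n` component of the endomorphism operad of `L`). -/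
abbrev C (K L : Type*) [CommRing K] [AddCommGroup L] [Module K L] (n : ℕ) :=
  MultilinearMap K (fun _ : Fin n => L) L

/-- The extension of an `n`-ary multilinear operation to sequences `ℕ → L`:
it evaluates `f` on the first `n` entries of the sequence.  Two `n`-ary
multilinear operations are equal iff their extensions are equal, so operadic
identities are stated as identities between extensions. -/
def ex {n : ℕ} (f : C K L n) : (ℕ → L) → L := fun x => f fun j => x j.1

/-- The sign `(-1)^e` for an integer exponent `e`. -/
def sgn (e : ℤ) : ℤ := (((-1 : ℤˣ) ^ e : ℤˣ) : ℤ)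

/-- Partial composition `f ∘ᵢ g`, where `n = deg g`:
`(f ∘ᵢ g)(x₀, x₁, …) = (-1)^{i(n-1)} f(x₀,…,x_{i-1}, g(x_i,…,x_{i+n-1}), x_{i+n},…)`. -/
def pc (n i : ℕ) (f g : (ℕ → L) → L) : (ℕ → L) → L :=
  fun x => sgn ((i : ℤ) * ((n : ℤ) - 1)) •
    f fun j => if j < i then x j else if j = i then g (fun k => x (i + k)) else x (j + n - 1)

/-- Total composition `f ∘ g := Σ_{i=0}^{m-1} f ∘ᵢ g`, where `m = deg f`, `n = deg g`. -/
def tc (m n : ℕ) (f g : (ℕ → L) → L) : (ℕ → L) → L :=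
  fun x => ∑ i ∈ Finset.range m, pc n i f g x

/-- The associator `(h, f, g) := (h ∘ f) ∘ g − h ∘ (f ∘ g)` of the total composition,
where `m = deg h`, `n = deg f`, `p = deg g`. -/
def assoc (m n p : ℕ) (h f g : (ℕ → L) → L) : (ℕ → L) → L :=
  fun x => tc (m + n - 1) p (tc m n h f) g x - tc m (n + p - 1) h (tc n p f g) x

/-- The brace `⟨h|fg⟩ := Σ (h ∘ᵢ f) ∘ⱼ g`, summed over `0 ≤ i ≤ m-2`,
`i + n ≤ j ≤ m + n - 2`, where `m = deg h`, `n = deg f`, `p = deg g`. -/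
def br2 (m n p : ℕ) (h f g : (ℕ → L) → L) : (ℕ → L) → L :=
  fun x => ∑ i ∈ Finset.range (m - 1), ∑ j ∈ Finset.Icc (i + n) (m + n - 2),
    pc p j (pc n i h f) g x

/-- The triple brace `⟨h|fgb⟩ := Σ ((h ∘ᵢ f) ∘ⱼ g) ∘ₖ b`, summed over `0 ≤ i ≤ m-3`,
`i + n ≤ j ≤ m + n - 3`, `j + p ≤ k ≤ m + n + p - 3`, where
`m = deg h`, `n = deg f`, `p = deg g`, `q = deg b`. -/
def br3 (m n p q : ℕ) (h f g b : (ℕ → L) → L) : (ℕ → L) → L :=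
  fun x => ∑ i ∈ Finset.range (m - 2), ∑ j ∈ Finset.Icc (i + n) (m + n - 3),
    ∑ k ∈ Finset.Icc (j + p) (m + n + p - 3),
      pc q k (pc p j (pc n i h f) g) b x

/-- The Gerstenhaber bracket `[f,g] := f ∘ g − (-1)^{|f||g|} g ∘ f`,
where `m = deg f`, `n = deg g`, `|f| = m - 1`, `|g| = n - 1`. -/
def gb (m n : ℕ) (f g : (ℕ → L) → L) : (ℕ → L) → L :=
  fun x => tc m n f g x - sgn (((m : ℤ) - 1) * ((n : ℤ) - 1)) • tc n m g f x

/-- The cup product `f ⌣ g := (-1)^{deg f} (μ ∘₀ f) ∘_{deg f} g`,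
where `m = deg f`, `n = deg g`. -/
def cup (μ : C K L 2) (m n : ℕ) (f g : (ℕ → L) → L) : (ℕ → L) → L :=
  fun x => sgn (m : ℤ) • pc n m (pc m 0 (ex μ) f) g x

/-- The coboundary operator `δ_μ f := −[f, μ]`, where `m = deg f`. -/
def delta (μ : C K L 2) (m : ℕ) (f : (ℕ → L) → L) : (ℕ → L) → L :=
  fun x => - gb m 2 f (ex μ) x


lemma sgn_add (a b : ℤ) : sgn (a + b) = sgn a * sgn b := by
  simp [sgn, zpow_add]

lemma sgn_two_mul_add (k b : ℤ) : sgn (2 * k + b) = sgn b := by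
  unfold sgn
  have : ((-1 : ℤˣ)) ^ (2 * k + b) = (-1) ^ b := by
    rw [zpow_add, mul_comm (2:ℤ) k, zpow_mul, zpow_two, Int.units_mul_self, one_mul]
  rw [this]

lemma sgn_add_two_mul (e c : ℤ) : sgn (e + 2 * c) = sgn e := by
  rw [add_comm, sgn_two_mul_add]

lemma slot_hom {m : ℕ} (H : C K L m) {i : ℕ} (hi : i < m) (S : L → ℕ → L)
    (hS : ∀ w, S w i = w) (hS' : ∀ w w' k, k ≠ i → S w k = S w' k) :
    ∃ φ : L →+ L, ∀ w, ex H (S w) = φ w := by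
  have base : ∀ w, (fun jj : Fin m => S w jj.1) =
      Function.update (fun jj : Fin m => S 0 jj.1) ⟨i, hi⟩ w := by
    intro w; funext jj
    by_cases hj : jj = ⟨i, hi⟩
    · subst hj; simp [Function.update_self, hS]
    · rw [Function.update_of_ne hj]
      exact hS' w 0 jj.1 (fun hc => hj (Fin.ext hc))
  refine ⟨AddMonoidHom.mk' (fun w => H (Function.update (fun jj : Fin m => S 0 jj.1) ⟨i, hi⟩ w))
      (fun a b => H.map_update_add _ _ _ _), fun w => ?_⟩
  simp only [AddMonoidHom.mk'_apply, ex]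
  exact congrArg H (base w)

lemma pc_apply (n i : ℕ) (f g : (ℕ → L) → L) (x : ℕ → L) :
    pc n i f g x = sgn ((i : ℤ) * ((n : ℤ) - 1)) •
      f fun j => if j < i then x j else if j = i then g (fun k => x (i + k)) else x (j + n - 1) :=
  rfl

lemma ex_pcslot_smul {m : ℕ} (H : C K L m) {i : ℕ} (hi : i < m) (c : ℤ) (v : L)
    (x : ℕ → L) (N : ℕ) :
    ex H (fun k => if k < i then x k else if k = i then c • v else x (k + N - 1))
      = c • ex H (fun k => if k < i then x k else if k = i then v else x (k + N - 1)) := by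
  obtain ⟨φ, hφ⟩ := slot_hom H hi
    (fun w k => if k < i then x k else if k = i then w else x (k + N - 1))
    (fun w => by simp)
    (fun w w' k hk => by by_cases h1 : k < i <;> simp [h1, hk])
  have h1 := hφ (c • v)
  have h2 := hφ v
  rw [h1, h2, map_zsmul]

lemma ex_pcslot_sum {m : ℕ} (H : C K L m) {i : ℕ} (hi : i < m) {ι : Type*} (s : Finset ι)
    (v : ι → L) (x : ℕ → L) (N : ℕ) :
    ex H (fun k => if k < i then x k else if k = i then ∑ t ∈ s, v t else x (k + N - 1))
      = ∑ t ∈ s, ex H (fun k => if k < i then x k else if k = i then v t else x (k + N - 1)) := by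
  obtain ⟨φ, hφ⟩ := slot_hom H hi
    (fun w k => if k < i then x k else if k = i then w else x (k + N - 1))
    (fun w => by simp)
    (fun w w' k hk => by by_cases h1 : k < i <;> simp [h1, hk])
  have h1 := hφ (∑ t ∈ s, v t)
  rw [h1, map_sum]
  refine Finset.sum_congr rfl fun t _ => ?_
  have h2 := hφ (v t)
  rw [h2]

lemma pc_sum_outer {ι : Type*} (s : Finset ι) (F : ι → (ℕ → L) → L) (g : (ℕ → L) → L)
    (q a : ℕ) (x : ℕ → L) :
    pc q a (fun y => ∑ t ∈ s, F t y) g x = ∑ t ∈ s, pc q a (F t) g x := by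
  simp only [pc_apply, Finset.smul_sum]

lemma pc_sum_slot {m : ℕ} (H : C K L m) {i : ℕ} (hi : i < m) {ι : Type*} (s : Finset ι)
    (G : ι → (ℕ → L) → L) (q : ℕ) (x : ℕ → L) :
    pc q i (ex H) (fun y => ∑ t ∈ s, G t y) x = ∑ t ∈ s, pc q i (ex H) (G t) x := by
  simp only [pc_apply]
  rw [ex_pcslot_sum H hi, Finset.smul_sum]


lemma lemA {m n p : ℕ} (H : C K L m) (f g : (ℕ → L) → L) {i j : ℕ}
    (hi : i < m) (hj : j < n) (x : ℕ → L) :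
    pc (n + p - 1) i (ex H) (pc p j f g) x = pc p (i + j) (pc n i (ex H) f) g x := by
  simp only [pc_apply]
  rw [ex_pcslot_smul H hi]
  rw [smul_smul, smul_smul]
  congr 1
  · rw [← sgn_add, ← sgn_add]
    congr 1
    have e1 : ((n + p - 1 : ℕ) : ℤ) = (n : ℤ) + (p : ℤ) - 1 := by omega
    have e2 : ((i + j : ℕ) : ℤ) = (i : ℤ) + (j : ℤ) := by omega
    rw [e1, e2]
    ring
  · simp only [ex]
    congr 1
    funext jj
    rcases jj with ⟨k, hk⟩
    simp only []
    by_cases h1 : k < i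
    · have h2 : k < i + j := by omega
      simp only [if_pos h1, if_pos h2]
    · by_cases h2 : k = i
      · simp only [if_neg h1, if_pos h2]
        congr 1
        funext l
        by_cases h3 : l < j
        · simp only [if_pos h3, if_pos (show i + l < i + j by omega)]
        · by_cases h4 : l = j
          · simp only [if_neg h3, if_pos h4, if_neg (show ¬ i + l < i + j by omega),
              if_pos (show i + l = i + j by omega)]
            congr 1
            funext k'
            congr 1
            omega
          · simp only [if_neg h3, if_neg h4, if_neg (show ¬ i + l < i + j by omega),
              if_neg (show ¬ i + l = i + j by omega)]
            congr 1
            omega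
      · have h3 : ¬ k + n - 1 < i + j := by omega
        have h4 : ¬ k + n - 1 = i + j := by omega
        simp only [if_neg h1, if_neg h2, if_neg h3, if_neg h4]
        congr 1
        omega

lemma lemB {n p : ℕ} (hh ff : (ℕ → L) → L) (G : C K L p) {a i : ℕ}
    (hai : a < i) (x : ℕ → L) :
    pc p a (pc n i hh ff) (ex G) x
      = sgn (((n : ℤ) - 1) * ((p : ℤ) - 1)) • pc n (i + p - 1) (pc p a hh (ex G)) ff x := by
  simp only [pc_apply]
  simp only [smul_smul]
  congr 1
  · rw [← sgn_add, ← sgn_add, ← sgn_add]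
    have e1 : ((i + p - 1 : ℕ) : ℤ) = (i : ℤ) + (p : ℤ) - 1 := by omega
    rw [e1]
    rw [show (a : ℤ) * ((p : ℤ) - 1) + (i : ℤ) * ((n : ℤ) - 1)
        = ((n : ℤ) - 1) * ((p : ℤ) - 1) + (((i : ℤ) + (p : ℤ) - 1) * ((n : ℤ) - 1)
          + (a : ℤ) * ((p : ℤ) - 1)) + 2 * (-(((n : ℤ) - 1) * ((p : ℤ) - 1))) by ring]
    rw [sgn_add_two_mul]
  · congr 1
    funext k
    by_cases h1 : k < a
    · simp only [if_pos h1, if_pos (show k < i by omega), if_pos (show k < i + p - 1 by omega)]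
    · by_cases h2 : k = a
      · simp only [if_neg h1, if_pos h2, if_pos (show k < i by omega)]
        simp only [ex]
        congr 1
        funext ll
        rcases ll with ⟨l, hl⟩
        simp only []
        rw [if_pos (show a + l < i + p - 1 by omega)]
      · by_cases h3 : k < i
        · simp only [if_pos h3, if_neg h1, if_neg h2,
            if_pos (show k + p - 1 < i + p - 1 by omega)]
        · by_cases h4 : k = i
          · simp only [if_neg h3, if_pos h4, if_neg h1, if_neg h2,
              if_neg (show ¬ k + p - 1 < i + p - 1 by omega),
              if_pos (show k + p - 1 = i + p - 1 by omega)]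
            congr 1
            funext l
            rw [if_neg (show ¬ i + l < a by omega), if_neg (show ¬ i + l = a by omega)]
            congr 1
            omega
          · simp only [if_neg h3, if_neg h4, if_neg h1, if_neg h2,
              if_neg (show ¬ k + n - 1 < a by omega), if_neg (show ¬ k + n - 1 = a by omega),
              if_neg (show ¬ k + p - 1 < i + p - 1 by omega),
              if_neg (show ¬ k + p - 1 = i + p - 1 by omega)]
            congr 1
            omega

lemma sum_tri {M : Type*} [AddCommMonoid M] (m : ℕ) (F : ℕ → ℕ → M) :
    ∑ i ∈ Finset.range m, ∑ a ∈ Finset.range i, F i a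
      = ∑ a ∈ Finset.range m, ∑ i ∈ Finset.Ico (a + 1) m, F i a := by
  induction m with
  | zero => simp
  | succ m ih =>
    rw [Finset.sum_range_succ, ih, Finset.sum_range_succ (n := m), Finset.Ico_self,
      Finset.sum_empty, add_zero, ← Finset.sum_add_distrib]
    refine Finset.sum_congr rfl fun a ha => ?_
    have ham := Finset.mem_range.mp ha
    rw [Finset.sum_Ico_succ_top (by omega : a + 1 ≤ m)]


/-- the Getzler identity
`(h ∘ f) ∘ g − h ∘ (f ∘ g) = ⟨h|fg⟩ + (-1)^{(n-1)(p-1)} ⟨h|gf⟩`. -/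
theorem getzler_identity
    {m n p : ℕ} (h : C K L m) (f : C K L n) (g : C K L p) :
    tc (m + n - 1) p (tc m n (ex h) (ex f)) (ex g)
        - tc m (n + p - 1) (ex h) (tc n p (ex f) (ex g))
      = br2 m n p (ex h) (ex f) (ex g)
          + sgn (((n : ℤ) - 1) * ((p : ℤ) - 1)) • br2 m p n (ex h) (ex g) (ex f) := by
  funext x
  simp only [Pi.sub_apply, Pi.add_apply, Pi.smul_apply]
  have E1 : tc (m + n - 1) p (tc m n (ex h) (ex f)) (ex g) x
      = ∑ i ∈ Finset.range m, ∑ a ∈ Finset.range (m + n - 1),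
          pc p a (pc n i (ex h) (ex f)) (ex g) x := by
    simp only [tc]
    exact Eq.trans (Finset.sum_congr rfl fun a _ =>
      pc_sum_outer (Finset.range m) (fun i => pc n i (ex h) (ex f)) (ex g) p a x)
      Finset.sum_comm
  have E2 : tc m (n + p - 1) (ex h) (tc n p (ex f) (ex g)) x
      = ∑ i ∈ Finset.range m, ∑ j ∈ Finset.range n,
          pc p (i + j) (pc n i (ex h) (ex f)) (ex g) x := by
    simp only [tc]
    refine Finset.sum_congr rfl fun i hi => ?_
    have hi' := Finset.mem_range.mp hi
    refine Eq.trans (pc_sum_slot h hi' (Finset.range n)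
      (fun j => pc p j (ex f) (ex g)) (n + p - 1) x) ?_
    exact Finset.sum_congr rfl fun j hj => lemA h (ex f) (ex g) hi' (Finset.mem_range.mp hj) x
  have E3 : ∀ i, i < m →
      ∑ a ∈ Finset.range (m + n - 1), pc p a (pc n i (ex h) (ex f)) (ex g) x
        = (∑ a ∈ Finset.range i, pc p a (pc n i (ex h) (ex f)) (ex g) x)
          + ((∑ j ∈ Finset.range n, pc p (i + j) (pc n i (ex h) (ex f)) (ex g) x)
            + ∑ a ∈ Finset.Ico (i + n) (m + n - 1), pc p a (pc n i (ex h) (ex f)) (ex g) x) := by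
    intro i hi
    have s1 : ∑ a ∈ Finset.range (m + n - 1), pc p a (pc n i (ex h) (ex f)) (ex g) x
        = (∑ a ∈ Finset.range i, pc p a (pc n i (ex h) (ex f)) (ex g) x)
          + ∑ a ∈ Finset.Ico i (m + n - 1), pc p a (pc n i (ex h) (ex f)) (ex g) x := by
      rw [Finset.range_eq_Ico, Finset.range_eq_Ico]
      exact (Finset.sum_Ico_consecutive (fun a => pc p a (pc n i (ex h) (ex f)) (ex g) x) (Nat.zero_le i) (show i ≤ m + n - 1 by omega)).symm
    have s2 : ∑ a ∈ Finset.Ico i (i + n), pc p a (pc n i (ex h) (ex f)) (ex g) x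
        = ∑ j ∈ Finset.range n, pc p (i + j) (pc n i (ex h) (ex f)) (ex g) x := by
      rw [Finset.sum_Ico_eq_sum_range, show i + n - i = n from by omega]
    rw [s1, ← Finset.sum_Ico_consecutive _ (show i ≤ i + n by omega)
      (show i + n ≤ m + n - 1 by omega), s2]
  have E3' : ∑ i ∈ Finset.range m, ∑ a ∈ Finset.range (m + n - 1),
        pc p a (pc n i (ex h) (ex f)) (ex g) x
      = (∑ i ∈ Finset.range m, ∑ a ∈ Finset.range i, pc p a (pc n i (ex h) (ex f)) (ex g) x)
        + ((∑ i ∈ Finset.range m, ∑ j ∈ Finset.range n,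
              pc p (i + j) (pc n i (ex h) (ex f)) (ex g) x)
          + ∑ i ∈ Finset.range m, ∑ a ∈ Finset.Ico (i + n) (m + n - 1),
              pc p a (pc n i (ex h) (ex f)) (ex g) x) := by
    rw [Finset.sum_congr rfl fun i hi => E3 i (Finset.mem_range.mp hi)]
    rw [Finset.sum_add_distrib, Finset.sum_add_distrib]
  have E4 : ∑ i ∈ Finset.range m, ∑ a ∈ Finset.Ico (i + n) (m + n - 1),
        pc p a (pc n i (ex h) (ex f)) (ex g) x
      = br2 m n p (ex h) (ex f) (ex g) x := by
    simp only [br2]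
    refine Eq.trans (Finset.sum_subset (Finset.range_subset_range.mpr (show m - 1 ≤ m by omega))
      (fun a _ hna => ?_)).symm (Finset.sum_congr rfl fun i hi => ?_)
    · have := Finset.mem_range.not.mp hna
      rw [Finset.Ico_eq_empty (by omega), Finset.sum_empty]
    · have hi' := Finset.mem_range.mp hi
      rw [show m + n - 1 = (m + n - 2) + 1 from by omega, Finset.Ico_add_one_right_eq_Icc]
  have E5 : ∑ i ∈ Finset.range m, ∑ a ∈ Finset.range i, pc p a (pc n i (ex h) (ex f)) (ex g) x
      = sgn (((n : ℤ) - 1) * ((p : ℤ) - 1)) • br2 m p n (ex h) (ex g) (ex f) x := by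
    calc ∑ i ∈ Finset.range m, ∑ a ∈ Finset.range i, pc p a (pc n i (ex h) (ex f)) (ex g) x
        = ∑ i ∈ Finset.range m, ∑ a ∈ Finset.range i,
            sgn (((n : ℤ) - 1) * ((p : ℤ) - 1)) •
              pc n (i + p - 1) (pc p a (ex h) (ex g)) (ex f) x :=
          Finset.sum_congr rfl fun i _ => Finset.sum_congr rfl fun a ha =>
            lemB (ex h) (ex f) g (Finset.mem_range.mp ha) x
      _ = sgn (((n : ℤ) - 1) * ((p : ℤ) - 1)) • ∑ i ∈ Finset.range m, ∑ a ∈ Finset.range i,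
            pc n (i + p - 1) (pc p a (ex h) (ex g)) (ex f) x := by
          simp only [← Finset.smul_sum]
      _ = sgn (((n : ℤ) - 1) * ((p : ℤ) - 1)) • br2 m p n (ex h) (ex g) (ex f) x := by
          congr 1
          rw [sum_tri m (fun i a => pc n (i + p - 1) (pc p a (ex h) (ex g)) (ex f) x)]
          simp only [br2]
          have sub : ∑ a ∈ Finset.range m, ∑ i ∈ Finset.Ico (a + 1) m,
                pc n (i + p - 1) (pc p a (ex h) (ex g)) (ex f) x
              = ∑ a ∈ Finset.range (m - 1), ∑ i ∈ Finset.Ico (a + 1) m,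
                pc n (i + p - 1) (pc p a (ex h) (ex g)) (ex f) x := by
            refine (Finset.sum_subset (Finset.range_subset_range.mpr (show m - 1 ≤ m by omega))
              (fun a _ hna => ?_)).symm
            have := Finset.mem_range.not.mp hna
            rw [Finset.Ico_eq_empty (by omega), Finset.sum_empty]
          rw [sub]
          refine Finset.sum_congr rfl fun a ha => ?_
          have ham := Finset.mem_range.mp ha
          refine Finset.sum_nbij' (fun i => i + p - 1) (fun j => j + 1 - p)
            (fun i hi => ?_) (fun j hj => ?_) (fun i hi => ?_) (fun j hj => ?_) (fun i hi => rfl)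
          · have h1 := (Finset.mem_Ico.mp hi).1
            have h2 := (Finset.mem_Ico.mp hi).2
            show i + p - 1 ∈ Finset.Icc (a + p) (m + p - 2)
            exact Finset.mem_Icc.mpr (by omega)
          · have h1 := (Finset.mem_Icc.mp hj).1
            have h2 := (Finset.mem_Icc.mp hj).2
            show j + 1 - p ∈ Finset.Ico (a + 1) m
            exact Finset.mem_Ico.mpr (by omega)
          · have h1 := (Finset.mem_Ico.mp hi).1
            show i + p - 1 + 1 - p = i
            omega
          · have h1 := (Finset.mem_Icc.mp hj).1
            show j + 1 - p + p - 1 = j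
            omega
  rw [E1, E2, E3', E4, E5]
  abel


end OperadPrelude
end

section
/- Albert identities (power-associativity of a binary operation in the composition algebra): for every bilinear map μ ∈ C², writing μ² := μ ∘ μ ∈ C³, one has μ² ∘ μ = μ ∘ μ² and (μ² ∘ μ) ∘ μ = μ² ∘ μ². Consequently, by the Albert criterion, over a field of characteristic 0 the subalgebra of the composition algebra (C, ∘) generated by μ is power-associative. -/
open Finset

section OperadPrelude

variable {K : Type*} [CommRing K] {L : Type*} [AddCommGroup L] [Module K L]

lemma upd0 (a b c : L) : Function.update ![a, c] 0 b = ![b, c] := by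
  funext j; fin_cases j <;> simp

lemma upd1 (a b c : L) : Function.update ![a, b] 1 c = ![a, c] := by
  funext j; fin_cases j <;> simp [Function.update]

/-- The binary operation underlying `μ`. -/
def m2 (μ : C K L 2) (a b : L) : L := μ ![a, b]

lemma mu_apply (μ : C K L 2) (y : Fin 2 → L) : μ y = m2 μ (y 0) (y 1) := by
  unfold m2; congr; funext j; fin_cases j <;> simp

lemma m2_addl (μ : C K L 2) (a b c : L) : m2 μ (a + b) c = m2 μ a c + m2 μ b c := by
  unfold m2; rw [← upd0 a (a+b) c, μ.map_update_add, upd0, upd0]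

lemma m2_addr (μ : C K L 2) (a b c : L) : m2 μ a (b + c) = m2 μ a b + m2 μ a c := by
  unfold m2; rw [← upd1 a b (b+c), μ.map_update_add, upd1, upd1]

lemma m2_negl (μ : C K L 2) (a b : L) : m2 μ (-a) b = - m2 μ a b := by
  unfold m2; rw [← upd0 a (-a) b, μ.map_update_neg, upd0]

lemma m2_negr (μ : C K L 2) (a b : L) : m2 μ a (-b) = - m2 μ a b := by
  unfold m2; rw [← upd1 a b (-b), μ.map_update_neg, upd1]

/-- the Albert identities `μ² ∘ μ = μ ∘ μ²` and
`(μ² ∘ μ) ∘ μ = μ² ∘ μ²`, where `μ² := μ ∘ μ ∈ C³`; by the Albert criterion they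
imply power-associativity of the subalgebra generated by `μ` in `(C, ∘)` over a
field of characteristic `0`. -/
theorem albert_identities (μ : C K L 2) :
    tc 3 2 (tc 2 2 (ex μ) (ex μ)) (ex μ) = tc 2 3 (ex μ) (tc 2 2 (ex μ) (ex μ)) ∧
      tc 4 2 (tc 3 2 (tc 2 2 (ex μ) (ex μ)) (ex μ)) (ex μ)
        = tc 3 3 (tc 2 2 (ex μ) (ex μ)) (tc 2 2 (ex μ) (ex μ)) := by
  have h2 : (((-1 : ℤˣ) ^ (2 : ℤ) : ℤˣ) : ℤ) = 1 := by decide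
  have h3 : (((-1 : ℤˣ) ^ (3 : ℤ) : ℤˣ) : ℤ) = -1 := by decide
  have h4 : (((-1 : ℤˣ) ^ (4 : ℤ) : ℤˣ) : ℤ) = 1 := by decide
  constructor <;>
  · funext x
    simp only [tc, pc, ex, sgn, Finset.sum_range_succ, Finset.sum_range_zero, mu_apply]
    norm_num [m2_addl, m2_addr, m2_negl, m2_negr, h2, h3, h4]
    abel

end OperadPrelude
end

section
/- Right Leibniz rule in an operadic system: for every bilinear map μ ∈ C² and all multilinear maps f ∈ C^m, g ∈ C^n, h ∈ C^p, (f ⌣ g) ∘ h = f ⌣ (g ∘ h) + (−1)^{(p−1)n} (f ∘ h) ⌣ g. -/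
open Finset

section OperadPrelude

variable {K : Type*} [CommRing K] {L : Type*} [AddCommGroup L] [Module K L]

-- ==== auxiliary lemmas ====

lemma sgn_mul_sgn (a b : ℤ) : sgn a * sgn b = sgn (a + b) := by
  simp [sgn, ← Units.val_mul, ← zpow_add]

lemma sgn_smul_sgn (a b : ℤ) (v : L) : sgn a • sgn b • v = sgn (a + b) • v := by
  rw [smul_smul, sgn_mul_sgn]

lemma sgn_congr {a b : ℤ} (h : (a - b) % 2 = 0) : sgn a = sgn b := by
  obtain ⟨k, hk⟩ := Int.dvd_of_emod_eq_zero h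
  have : a = b + 2 * k := by omega
  subst this
  unfold sgn
  rw [zpow_add]
  rw [mul_comm, zpow_mul, show ((2:ℤ)) = ((2:ℕ):ℤ) from rfl, zpow_natCast, Int.units_sq]
  simp

def Mmu (μ : C K L 2) (u v : L) : L := μ ![u, v]

lemma ex_mu (μ : C K L 2) (z : ℕ → L) : ex μ z = Mmu μ (z 0) (z 1) := by
  unfold ex Mmu; congr 1; funext j; fin_cases j <;> rfl

def MmuL (μ : C K L 2) (v : L) : L →+ L where
  toFun u := Mmu μ u v
  map_zero' := by
    apply MultilinearMap.map_coord_zero (i := 0); rfl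
  map_add' u u' := by
    have h := μ.map_update_add ![u, v] 0 u u'
    simpa [Mmu, show ∀ w : L, Function.update ![u, v] (0 : Fin 2) w = ![w, v] from by
      intro w; funext j; fin_cases j <;> simp] using h

def MmuR (μ : C K L 2) (u : L) : L →+ L where
  toFun v := Mmu μ u v
  map_zero' := by
    apply MultilinearMap.map_coord_zero (i := 1); rfl
  map_add' v v' := by
    have h := μ.map_update_add ![u, v] 1 v v'
    simpa [Mmu, show ∀ w : L, Function.update ![u, v] (1 : Fin 2) w = ![u, w] from by
      intro w; funext j; fin_cases j <;> simp] using h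

lemma Mmu_zsmul_left (μ : C K L 2) (c : ℤ) (u v : L) :
    Mmu μ (c • u) v = c • Mmu μ u v := (MmuL μ v).map_zsmul c u

lemma Mmu_zsmul_right (μ : C K L 2) (c : ℤ) (u v : L) :
    Mmu μ u (c • v) = c • Mmu μ u v := (MmuR μ u).map_zsmul c v

lemma Mmu_sum_left (μ : C K L 2) {ι : Type*} (s : Finset ι) (u : ι → L) (v : L) :
    Mmu μ (∑ i ∈ s, u i) v = ∑ i ∈ s, Mmu μ (u i) v := map_sum (MmuL μ v) u s

lemma Mmu_sum_right (μ : C K L 2) {ι : Type*} (s : Finset ι) (u : L) (v : ι → L) :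
    Mmu μ u (∑ i ∈ s, v i) = ∑ i ∈ s, Mmu μ u (v i) := map_sum (MmuR μ u) v s

/-- unsigned partial composition -/
def upc (n i : ℕ) (f g : (ℕ → L) → L) : (ℕ → L) → L :=
  fun x => f fun j => if j < i then x j else if j = i then g (fun k => x (i + k)) else x (j + n - 1)

lemma ex_dep {a : ℕ} (f : C K L a) (x y : ℕ → L) (hxy : ∀ k, k < a → x k = y k) :
    ex f x = ex f y := by
  unfold ex; congr 1; funext j; exact hxy _ j.isLt

lemma cup_eval (μ : C K L 2) (a b : ℕ) (F G : (ℕ → L) → L)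
    (hF : ∀ x y : ℕ → L, (∀ k, k < a → x k = y k) → F x = F y) (x : ℕ → L) :
    cup μ a b F G x
      = sgn ((a : ℤ) * (b : ℤ)) • Mmu μ (F x) (G fun k => x (a + k)) := by
  unfold cup pc
  rw [ex_mu]
  norm_num [show 1 + a - 1 = a from by omega]
  rw [hF (fun k => if k < a then x k else if k = a then G fun k => x (a + k) else x (k + b - 1)) x
    (fun k hk => by simp [hk]), sgn_smul_sgn, sgn_smul_sgn]
  congr 1
  apply sgn_congr
  have : (a : ℤ) + (a * ((b:ℤ) - 1) + 0) - a * b = 0 := by ring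
  omega


lemma lem_L1 (μ : C K L 2) (m n p : ℕ) (f : C K L m) (g : C K L n) (h : C K L p)
    (x : ℕ → L) (i : ℕ) (hi : i < m) :
    pc p i (cup μ m n (ex f) (ex g)) (ex h) x
      = sgn ((i : ℤ) * ((p : ℤ) - 1) + (m : ℤ) * (n : ℤ)) •
          Mmu μ (upc p i (ex f) (ex h) x) (ex g fun k => x (m + p - 1 + k)) := by
  unfold pc
  rw [cup_eval μ m n (ex f) (ex g) (fun x y hxy => ex_dep f x y hxy)]
  rw [sgn_smul_sgn]
  congr 1
  congr 1
  unfold ex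
  congr 1
  funext j
  have h1 : ¬ (m + (j : ℕ) < i) := by omega
  have h2 : ¬ (m + (j : ℕ) = i) := by omega
  simp only [if_neg h1, if_neg h2]
  congr 1
  omega


lemma lem_L2 (μ : C K L 2) (m n p : ℕ) (f : C K L m) (g : C K L n) (h : C K L p)
    (x : ℕ → L) (i : ℕ) (hi : i < n) :
    pc p (m + i) (cup μ m n (ex f) (ex g)) (ex h) x
      = sgn ((m : ℤ) * ((n : ℤ) + (p : ℤ) - 1) + (i : ℤ) * ((p : ℤ) - 1)) •
          Mmu μ (ex f x) (upc p i (ex g) (ex h) fun k => x (m + k)) := by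
  unfold pc
  rw [cup_eval μ m n (ex f) (ex g) (fun x y hxy => ex_dep f x y hxy)]
  rw [sgn_smul_sgn]
  rw [show sgn ((↑(m + i) : ℤ) * ((p:ℤ) - 1) + (m:ℤ) * (n:ℤ))
      = sgn ((m : ℤ) * ((n : ℤ) + (p : ℤ) - 1) + (i : ℤ) * ((p : ℤ) - 1)) from
    sgn_congr (by
      have : ((↑(m + i) : ℤ) * ((p:ℤ) - 1) + (m:ℤ) * (n:ℤ))
          - ((m : ℤ) * ((n : ℤ) + (p : ℤ) - 1) + (i : ℤ) * ((p : ℤ) - 1)) = 0 := by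
        push_cast; ring
      omega)]
  congr 1
  congr 1
  · unfold ex
    congr 1
    funext j
    have h1 : (j : ℕ) < m + i := by omega
    simp only [if_pos h1]
  · unfold upc ex
    congr 1
    funext j
    rcases lt_trichotomy (j : ℕ) i with hj | hj | hj
    · have h1 : m + (j : ℕ) < m + i := by omega
      simp only [if_pos h1, if_pos hj]
    · have h1 : ¬ (m + (j : ℕ) < m + i) := by omega
      have h2 : m + (j : ℕ) = m + i := by omega
      simp only [if_neg h1, if_pos h2, if_neg (by omega : ¬ ((j:ℕ) < i)), if_pos hj]
      congr 1
      funext k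
      congr 1
      omega
    · have h1 : ¬ (m + (j : ℕ) < m + i) := by omega
      have h2 : ¬ (m + (j : ℕ) = m + i) := by omega
      simp only [if_neg h1, if_neg h2, if_neg (by omega : ¬ ((j:ℕ) < i)),
        if_neg (by omega : ¬ ((j:ℕ) = i))]
      congr 1
      omega


lemma tc_dep {a b : ℕ} (f : C K L a) (h : C K L b) (x y : ℕ → L)
    (hxy : ∀ k, k < a + b - 1 → x k = y k) :
    tc a b (ex f) (ex h) x = tc a b (ex f) (ex h) y := by
  unfold tc pc
  refine Finset.sum_congr rfl fun i hi => ?_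
  simp only [Finset.mem_range] at hi
  congr 1
  unfold ex
  congr 1
  funext j
  rcases lt_trichotomy (j : ℕ) i with hj | hj | hj
  · simp only [if_pos hj]
    exact hxy _ (by omega)
  · simp only [if_pos hj, if_neg (by omega : ¬ ((j:ℕ) < i))]
    congr 1
    funext k
    exact hxy _ (by have := k.isLt; have := j.isLt; omega)
  · simp only [if_neg (by omega : ¬ ((j:ℕ) < i)), if_neg (by omega : ¬ ((j:ℕ) = i))]
    exact hxy _ (by have := j.isLt; omega)

lemma lem_R1 (μ : C K L 2) (m n p : ℕ) (f : C K L m) (g : C K L n) (h : C K L p)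
    (x : ℕ → L) :
    cup μ m (n + p - 1) (ex f) (tc n p (ex g) (ex h)) x
      = ∑ i ∈ Finset.range n,
          sgn ((m : ℤ) * ((n : ℤ) + (p : ℤ) - 1) + (i : ℤ) * ((p : ℤ) - 1)) •
            Mmu μ (ex f x) (upc p i (ex g) (ex h) fun k => x (m + k)) := by
  rw [cup_eval μ m (n + p - 1) (ex f) _ (fun x y hxy => ex_dep f x y hxy)]
  rw [show tc n p (ex g) (ex h) (fun k => x (m + k))
      = ∑ i ∈ Finset.range n, sgn ((i:ℤ) * ((p:ℤ) - 1)) •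
          upc p i (ex g) (ex h) (fun k => x (m + k)) from rfl]
  rw [Mmu_sum_right, Finset.smul_sum]
  refine Finset.sum_congr rfl fun i hi => ?_
  simp only [Finset.mem_range] at hi
  rw [Mmu_zsmul_right, sgn_smul_sgn]
  congr 1
  apply sgn_congr
  have h2 : (↑(n + p - 1) : ℤ) = (n:ℤ) + (p:ℤ) - 1 := by omega
  rw [h2]
  ring_nf
  norm_num

lemma lem_R2 (μ : C K L 2) (m n p : ℕ) (f : C K L m) (g : C K L n) (h : C K L p)
    (x : ℕ → L) :
    sgn (((p : ℤ) - 1) * (n : ℤ)) • cup μ (m + p - 1) n (tc m p (ex f) (ex h)) (ex g) x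
      = ∑ i ∈ Finset.range m,
          sgn ((i : ℤ) * ((p : ℤ) - 1) + (m : ℤ) * (n : ℤ)) •
            Mmu μ (upc p i (ex f) (ex h) x) (ex g fun k => x (m + p - 1 + k)) := by
  rw [cup_eval μ (m + p - 1) n _ (ex g) (fun x y hxy => tc_dep f h x y
    (fun k hk => hxy k (by omega)))]
  rw [show tc m p (ex f) (ex h) x
      = ∑ i ∈ Finset.range m, sgn ((i:ℤ) * ((p:ℤ) - 1)) •
          upc p i (ex f) (ex h) x from rfl]
  rw [Mmu_sum_left, Finset.smul_sum, Finset.smul_sum]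
  refine Finset.sum_congr rfl fun i hi => ?_
  simp only [Finset.mem_range] at hi
  rw [Mmu_zsmul_left, sgn_smul_sgn, sgn_smul_sgn]
  congr 1
  apply sgn_congr
  have h2 : (↑(m + p - 1) : ℤ) = (m:ℤ) + (p:ℤ) - 1 := by omega
  have : (((p : ℤ) - 1) * (n : ℤ) + (((m:ℤ) + (p:ℤ) - 1) * (n:ℤ) + (i:ℤ) * ((p:ℤ) - 1)))
      - ((i : ℤ) * ((p : ℤ) - 1) + (m : ℤ) * (n : ℤ))
      = 2 * (((p:ℤ) - 1) * (n:ℤ)) := by ring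
  rw [h2]
  omega


/-- the right Leibniz rule
`(f ⌣ g) ∘ h = f ⌣ (g ∘ h) + (-1)^{(p-1)n} (f ∘ h) ⌣ g`. -/
theorem right_leibniz_rule
    (μ : C K L 2) {m n p : ℕ} (f : C K L m) (g : C K L n) (h : C K L p) :
    tc (m + n) p (cup μ m n (ex f) (ex g)) (ex h)
      = cup μ m (n + p - 1) (ex f) (tc n p (ex g) (ex h))
          + sgn (((p : ℤ) - 1) * (n : ℤ)) •
              cup μ (m + p - 1) n (tc m p (ex f) (ex h)) (ex g) := by
  funext x
  simp only [Pi.add_apply, Pi.smul_apply]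
  rw [show tc (m + n) p (cup μ m n (ex f) (ex g)) (ex h) x
      = ∑ i ∈ Finset.range (m + n), pc p i (cup μ m n (ex f) (ex g)) (ex h) x from rfl]
  rw [Finset.sum_range_add]
  rw [lem_R1 μ m n p f g h x, lem_R2 μ m n p f g h x]
  rw [add_comm]
  congr 1
  · exact Finset.sum_congr rfl fun i hi =>
      lem_L2 μ m n p f g h x i (Finset.mem_range.mp hi)
  · exact Finset.sum_congr rfl fun i hi =>
      lem_L1 μ m n p f g h x i (Finset.mem_range.mp hi)


end OperadPrelude
end
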